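/- Let r, s be real with 0 < s, 2s < r, and r + 5s/3 < 1, and suppose 1/2 + s ≤ r. Then the point (0, r − s) lies in the closed region D2 = {(y₁, y₂) : 0 ≤ y₁ ≤ s, r − s + y₁ ≤ y₂ ≤ r}, the point (1 − r + s, 1 − r + s) lies in the closed region D1 = {(y₁, y₂) : 0 ≤ y₁ ≤ y₂ ≤ r − s}, the point (r − s, 1) lies in the closed region D11 = {(y₁, y₂) : s ≤ y₁ ≤ r − 3(1 − y₂)/4, 1 − 4s/3 ≤ y₂ ≤ 1}, and F₂(0, r − s) = (1 − r + s, 1 − r + s), F₁(1 − r + s, 1 − r + s) = (r − s, 1), F₁₁(r − s, 1) = (0, r − s). Thus these three points form a period-3 orbit on the boundary of the simplex with symbolic code 2 → 1 → 11. -/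
import Mathlib


/-- The affine branch of the return-time map on region 2. -/
noncomputable def F2 (r s : ℝ) (p : ℝ × ℝ) : ℝ × ℝ :=
  (1 - (5*p.2 - p.1)/3 + 2*(r - s)/3, 1 - (5*p.2 - 4*p.1)/3 + 2*(r - s)/3)

/-- The affine branch of the return-time map on region 1. -/
noncomputable def F1 (p : ℝ × ℝ) : ℝ × ℝ :=
  (1 - p.2, 1 - p.2 + p.1)

/-- The affine branch of the return-time map on region 11. -/
noncomputable def F11 (p : ℝ × ℝ) : ℝ × ℝ :=
  (3*(1 - p.2)/4, p.1 + 3*(1 - p.2)/4)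

/-- The closed region D2. -/
def D2 (r s : ℝ) : Set (ℝ × ℝ) :=
  {p | 0 ≤ p.1 ∧ p.1 ≤ s ∧ r - s + p.1 ≤ p.2 ∧ p.2 ≤ r}

/-- The closed region D1. -/
def D1 (r s : ℝ) : Set (ℝ × ℝ) :=
  {p | 0 ≤ p.1 ∧ p.1 ≤ p.2 ∧ p.2 ≤ r - s}

/-- The closed region D11. -/
def D11 (r s : ℝ) : Set (ℝ × ℝ) :=
  {p | s ≤ p.1 ∧ p.1 ≤ r - 3*(1 - p.2)/4 ∧ 1 - 4*s/3 ≤ p.2 ∧ p.2 ≤ 1}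

theorem boundary_period3_orbit_2_1_11 (r s : ℝ)
    (hs : 0 < s) (hrs : 2*s < r) (h1 : r + 5*s/3 < 1) (hlo : 1/2 + s ≤ r) :
    ((0 : ℝ), r - s) ∈ D2 r s ∧
    (1 - r + s, 1 - r + s) ∈ D1 r s ∧
    (r - s, (1 : ℝ)) ∈ D11 r s ∧
    F2 r s (0, r - s) = (1 - r + s, 1 - r + s) ∧
    F1 (1 - r + s, 1 - r + s) = (r - s, 1) ∧
    F11 (r - s, 1) = (0, r - s) := by
  refine ⟨⟨le_refl _, le_of_lt hs, by simp, by dsimp only; linarith⟩,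
    ⟨by dsimp only; linarith, le_refl _, by dsimp only; linarith⟩,
    ⟨by dsimp only; linarith, by dsimp only; norm_num; linarith, by dsimp only; linarith, le_refl _⟩,
    ?_, ?_, ?_⟩ <;>
  · simp only [F2, F1, F11, Prod.mk.injEq]
    constructor <;> ring
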